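/- With π, τ, U, Y as above, any other randomized prediction set C(U) ⊆ {1,...,C} (a measurable set-valued function of U) satisfying P[Y ∈ C(U)] ≥ τ has expected cardinality E[|C(U)|] ≥ E[|S(U;π,τ)|]; i.e., the oracle randomized set is the smallest achieving coverage τ. -/

import Mathlib

open MeasureTheory Finset

noncomputable section

/-- Number of labels with strictly larger probability than `y`. -/
def nAbove {C : ℕ} (π : Fin C → ℝ) (y : Fin C) : ℕ :=
  (Finset.univ.filter (fun y' => π y < π y')).card

/-- The set of labels attaining the `c` largest probabilities
(well-defined as a set of size `min c C` when the entries of `π` are distinct). -/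
def topSet {C : ℕ} (π : Fin C → ℝ) (c : ℕ) : Finset (Fin C) :=
  Finset.univ.filter (fun y => nAbove π y < c)

/-- The `r`-th largest entry of `π` (0-indexed: `sortedDesc π 0 = π_(1)`),
and `0` if `r` is out of range. -/
def sortedDesc {C : ℕ} (π : Fin C → ℝ) (r : ℕ) : ℝ :=
  if h : r < C then π ((Tuple.sort π) (Fin.rev ⟨r, h⟩)) else 0

/-- Sum of the `c` largest entries of `π`: `π_(1) + ... + π_(c)`. -/
def topSum {C : ℕ} (π : Fin C → ℝ) (c : ℕ) : ℝ :=
  ∑ r ∈ Finset.range c, sortedDesc π r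

/-- Generalized conditional quantile `L(π, τ) = min {c ∈ {1,...,C} : π_(1) + ... + π_(c) ≥ τ}`. -/
def Lgen {C : ℕ} (π : Fin C → ℝ) (τ : ℝ) : ℕ :=
  sInf {c : ℕ | 1 ≤ c ∧ τ ≤ topSum π c}

/-- `V(π, τ) = (∑_{c=1}^{L(π,τ)} π_(c) − τ) / π_(L(π,τ))`. -/
def Vgen {C : ℕ} (π : Fin C → ℝ) (τ : ℝ) : ℝ :=
  (topSum π (Lgen π τ) - τ) / sortedDesc π (Lgen π τ - 1)

/-- The randomized oracle prediction set `S(u; π, τ)`: the top `L(π,τ) − 1` labels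
if `u ≤ V(π,τ)`, and the top `L(π,τ)` labels otherwise. -/
def Sgen {C : ℕ} (u : ℝ) (π : Fin C → ℝ) (τ : ℝ) : Finset (Fin C) :=
  if u ≤ Vgen π τ then topSet π (Lgen π τ - 1) else topSet π (Lgen π τ)

/-- The generalized inverse quantile conformity score
`E(y, u; π) = min {τ ∈ [0,1] : y ∈ S(u; π, τ)}`. -/
def Egen {C : ℕ} (y : Fin C) (u : ℝ) (π : Fin C → ℝ) : ℝ :=
  sInf {τ : ℝ | τ ∈ Set.Icc (0 : ℝ) 1 ∧ y ∈ Sgen u π τ}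


open scoped ENNReal

section AuxOracle

variable {C : ℕ} {π : Fin C → ℝ}

lemma nAbove_lt_C (y : Fin C) : nAbove π y < C := by
  have h : (Finset.univ.filter (fun y' => π y < π y')) ⊆ Finset.univ.erase y := by
    intro z hz
    simp only [mem_filter] at hz
    exact Finset.mem_erase.2 ⟨fun h => by simp [h] at hz, mem_univ z⟩
  have := Finset.card_le_card h
  have h2 : (Finset.univ.erase y).card = C - 1 := by
    rw [Finset.card_erase_of_mem (mem_univ y)]; simp
  have hC : 0 < C := Fin.pos y
  unfold nAbove
  omega

lemma strictMono_sort (hinj : Function.Injective π) :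
    StrictMono (π ∘ Tuple.sort π) :=
  (Tuple.monotone_sort π).strictMono_of_injective
    (hinj.comp (Tuple.sort π).injective)

lemma nAbove_sort (hinj : Function.Injective π) (j : Fin C) :
    nAbove π (Tuple.sort π j) = C - 1 - j := by
  have hs := strictMono_sort hinj
  have : nAbove π (Tuple.sort π j) = (Finset.Ioi j).card := by
    unfold nAbove
    apply Finset.card_bij (fun y _ => (Tuple.sort π).symm y)
    · intro y hy
      simp only [mem_filter] at hy
      simp only [Finset.mem_Ioi]
      have : π (Tuple.sort π j) < π (Tuple.sort π ((Tuple.sort π).symm y)) := by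
        simpa using hy.2
      exact hs.lt_iff_lt.mp this
    · intro a _ b _ h
      exact (Tuple.sort π).symm.injective h
    · intro b hb
      refine ⟨Tuple.sort π b, ?_, by simp⟩
      simp only [mem_filter, mem_univ, true_and]
      exact hs (Finset.mem_Ioi.mp hb)
  rw [this, Fin.card_Ioi]

lemma nAbove_sort_rev (hinj : Function.Injective π) (i : Fin C) :
    nAbove π (Tuple.sort π (Fin.rev i)) = i := by
  rw [nAbove_sort hinj, Fin.val_rev]
  omega

lemma nAbove_le_iff (hinj : Function.Injective π) {y z : Fin C} :
    nAbove π y ≤ nAbove π z ↔ π z ≤ π y := by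
  constructor
  · intro h
    by_contra hlt
    push_neg at hlt
    have hss : (Finset.univ.filter (fun y' => π z < π y')) ⊂
        (Finset.univ.filter (fun y' => π y < π y')) := by
      constructor
      · intro w hw
        simp only [mem_filter] at hw ⊢
        exact ⟨mem_univ w, lt_trans hlt hw.2⟩
      · intro hsub
        have hz : z ∈ (Finset.univ.filter (fun y' => π y < π y')) := by
          simp [hlt]
        have := hsub hz
        simp at this
    have := Finset.card_lt_card hss
    unfold nAbove at h
    omega
  · intro h
    apply Finset.card_le_card
    intro w hw
    simp only [mem_filter] at hw ⊢
    exact ⟨mem_univ w, lt_of_le_of_lt h hw.2⟩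

lemma nAbove_inj (hinj : Function.Injective π) : Function.Injective (nAbove π) := by
  intro y z h
  exact hinj (le_antisymm ((nAbove_le_iff hinj).mp h.ge) ((nAbove_le_iff hinj).mp h.le))

lemma sort_rev_nAbove (hinj : Function.Injective π) (y : Fin C) :
    Tuple.sort π (Fin.rev ⟨nAbove π y, nAbove_lt_C y⟩) = y := by
  apply nAbove_inj hinj
  exact nAbove_sort_rev hinj _

lemma mem_topSet_iff {c : ℕ} {y : Fin C} : y ∈ topSet π c ↔ nAbove π y < c := by
  simp [topSet]

lemma card_topSet (hinj : Function.Injective π) (c : ℕ) :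
    (topSet π c).card = min c C := by
  rw [← Finset.card_range (min c C)]
  apply Finset.card_bij (fun y _ => nAbove π y)
  · intro y hy
    rw [mem_topSet_iff] at hy
    simp only [Finset.mem_range, lt_min_iff]
    exact ⟨hy, nAbove_lt_C y⟩
  · intro a _ b _ h
    exact nAbove_inj hinj h
  · intro k hk
    simp only [Finset.mem_range, lt_min_iff] at hk
    refine ⟨Tuple.sort π (Fin.rev ⟨k, hk.2⟩), ?_, ?_⟩
    · rw [mem_topSet_iff, nAbove_sort_rev hinj]; exact hk.1
    · exact nAbove_sort_rev hinj ⟨k, hk.2⟩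

lemma topSum_eq_sum_topSet (hinj : Function.Injective π) {c : ℕ} (hc : c ≤ C) :
    topSum π c = ∑ y ∈ topSet π c, π y := by
  unfold topSum
  apply Finset.sum_bij
    (fun r hr => Tuple.sort π (Fin.rev ⟨r, lt_of_lt_of_le (Finset.mem_range.mp hr) hc⟩))
  · intro r hr
    rw [mem_topSet_iff, nAbove_sort_rev hinj]
    exact Finset.mem_range.mp hr
  · intro a ha b hb h
    have := congrArg (nAbove π) h
    rw [nAbove_sort_rev hinj, nAbove_sort_rev hinj] at this
    exact this
  · intro y hy
    rw [mem_topSet_iff] at hy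
    exact ⟨nAbove π y, Finset.mem_range.mpr hy, sort_rev_nAbove hinj y⟩
  · intro r hr
    rw [sortedDesc, dif_pos (lt_of_lt_of_le (Finset.mem_range.mp hr) hc)]

lemma mem_topSet_iff_le (hinj : Function.Injective π) {c : ℕ} (hc1 : 1 ≤ c) (hcC : c ≤ C)
    {y : Fin C} : y ∈ topSet π c ↔ sortedDesc π (c - 1) ≤ π y := by
  have hlt : c - 1 < C := by omega
  have hz : sortedDesc π (c-1) = π (Tuple.sort π (Fin.rev ⟨c-1, hlt⟩)) := dif_pos hlt
  rw [mem_topSet_iff, hz]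
  rw [← nAbove_le_iff hinj, nAbove_sort_rev hinj]
  simp only [Fin.val_mk]
  omega

variable (hpos : ∀ y, 0 < π y) (hsum : ∑ y, π y = 1) (hinj : Function.Injective π)
  {τ : ℝ} (hτ : τ ∈ Set.Ioc (0:ℝ) 1)

include hsum in
lemma Cpos : 0 < C := by
  by_contra h
  push_neg at h
  interval_cases C
  simp at hsum

include hsum hinj in
lemma topSum_C : topSum π C = 1 := by
  rw [topSum_eq_sum_topSet hinj le_rfl, ← hsum]
  apply Finset.sum_subset (Finset.subset_univ _)
  intro y _ hy
  exact absurd (mem_topSet_iff.mpr (nAbove_lt_C y)) hy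

include hsum hinj hτ in
lemma Lgen_spec : 1 ≤ Lgen π τ ∧ τ ≤ topSum π (Lgen π τ) := by
  have : C ∈ {c : ℕ | 1 ≤ c ∧ τ ≤ topSum π c} :=
    ⟨Cpos hsum, by rw [topSum_C hsum hinj]; exact hτ.2⟩
  exact Nat.sInf_mem ⟨C, this⟩

include hsum hinj hτ in
lemma Lgen_le_C : Lgen π τ ≤ C :=
  Nat.sInf_le ⟨Cpos hsum, by rw [topSum_C hsum hinj]; exact hτ.2⟩

include hsum hinj hτ in
lemma topSum_pred_lt : topSum π (Lgen π τ - 1) < τ := by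
  rcases Nat.eq_or_lt_of_le (Lgen_spec hsum hinj hτ).1 with h | h
  · rw [← h]
    simpa [topSum] using hτ.1
  · have hlt : Lgen π τ - 1 < Lgen π τ := by omega
    have := Nat.notMem_of_lt_sInf (by exact hlt : Lgen π τ - 1 < Lgen π τ)
    simp only [Set.mem_setOf_eq, not_and, not_le] at this
    exact this (by omega)

include hpos hsum hinj hτ in
lemma p_pos : 0 < sortedDesc π (Lgen π τ - 1) := by
  have hlt : Lgen π τ - 1 < C := by
    have := Lgen_le_C hsum hinj hτ
    have := Cpos hsum
    omega
  rw [sortedDesc, dif_pos hlt]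
  exact hpos _

include hsum hinj hτ in
lemma topSum_succ_pred :
    topSum π (Lgen π τ) = topSum π (Lgen π τ - 1) + sortedDesc π (Lgen π τ - 1) := by
  have h1 := (Lgen_spec hsum hinj hτ).1
  conv_lhs => rw [show Lgen π τ = (Lgen π τ - 1) + 1 by omega]
  rw [topSum, Finset.sum_range_succ, ← topSum]

include hpos hsum hinj hτ in
lemma Vgen_nonneg : 0 ≤ Vgen π τ :=
  div_nonneg (sub_nonneg.mpr (Lgen_spec hsum hinj hτ).2) (p_pos hpos hsum hinj hτ).le

include hpos hsum hinj hτ in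
lemma Vgen_lt_one : Vgen π τ < 1 := by
  rw [Vgen, div_lt_one (p_pos hpos hsum hinj hτ)]
  have := topSum_succ_pred hsum hinj hτ
  have := topSum_pred_lt hsum hinj hτ
  linarith

include hsum hinj hτ in
lemma sum_max_eq :
    ∑ y, max (π y - sortedDesc π (Lgen π τ - 1)) 0
      = topSum π (Lgen π τ) - (Lgen π τ : ℝ) * sortedDesc π (Lgen π τ - 1) := by
  set p := sortedDesc π (Lgen π τ - 1) with hp
  set L := Lgen π τ with hL
  have hL1 : 1 ≤ L := (Lgen_spec hsum hinj hτ).1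
  have hLC : L ≤ C := Lgen_le_C hsum hinj hτ
  have hmem : ∀ y : Fin C, y ∈ topSet π L ↔ p ≤ π y := fun y =>
    mem_topSet_iff_le hinj hL1 hLC
  have : ∑ y, max (π y - p) 0 = ∑ y ∈ topSet π L, (π y - p) := by
    rw [Finset.sum_filter_add_sum_filter_not Finset.univ (fun y => y ∈ topSet π L)
      (fun y => max (π y - p) 0) |>.symm]
    have e1 : ∑ y ∈ Finset.univ.filter (fun y => y ∈ topSet π L), max (π y - p) 0
        = ∑ y ∈ topSet π L, (π y - p) := by
      rw [Finset.filter_mem_eq_inter, Finset.univ_inter]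
      apply Finset.sum_congr rfl
      intro y hy
      exact max_eq_left (sub_nonneg.mpr ((hmem y).mp hy))
    have e2 : ∑ y ∈ Finset.univ.filter (fun y => y ∉ topSet π L), max (π y - p) 0 = 0 := by
      apply Finset.sum_eq_zero
      intro y hy
      simp only [Finset.mem_filter] at hy
      have : π y < p := by
        by_contra hc
        exact hy.2 ((hmem y).mpr (not_lt.mp hc))
      exact max_eq_right (by linarith)
    rw [e1, e2, add_zero]
  rw [this, Finset.sum_sub_distrib, Finset.sum_const,
    ← topSum_eq_sum_topSet hinj hLC, card_topSet hinj, min_eq_left hLC]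
  rw [nsmul_eq_mul]

include hpos hsum hinj hτ in
lemma key_real (t : Fin C → ℝ) (h0 : ∀ y, 0 ≤ t y) (h1 : ∀ y, t y ≤ 1)
    (hc : τ ≤ ∑ y, π y * t y) :
    (Lgen π τ : ℝ) - Vgen π τ ≤ ∑ y, t y := by
  set p := sortedDesc π (Lgen π τ - 1) with hp
  set L := Lgen π τ with hL
  have hppos : 0 < p := p_pos hpos hsum hinj hτ
  have hpt : ∀ y, π y * t y - max (π y - p) 0 ≤ p * t y := by
    intro y
    have hm : (π y - p) * t y ≤ max (π y - p) 0 := by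
      rcases le_or_gt (π y - p) 0 with h | h
      · exact le_trans (mul_nonpos_of_nonpos_of_nonneg h (h0 y)) (le_max_right _ _)
      · have : (π y - p) * t y ≤ (π y - p) := by nlinarith [h1 y, h0 y]
        exact le_trans this (le_max_left _ _)
    have expand : π y * t y - p * t y = (π y - p) * t y := by ring
    linarith [hm]
  have hsum1 : ∑ y, (π y * t y - max (π y - p) 0) ≤ ∑ y, p * t y :=
    Finset.sum_le_sum (fun y _ => hpt y)
  rw [Finset.sum_sub_distrib, sum_max_eq hsum hinj hτ, ← Finset.mul_sum] at hsum1
  have hkey : τ - topSum π L + (L:ℝ) * p ≤ p * ∑ y, t y := by linarith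
  have h2 : ((L:ℝ) - ∑ y, t y) * p ≤ topSum π L - τ := by nlinarith [hkey]
  have h3 : (L:ℝ) - ∑ y, t y ≤ (topSum π L - τ) / p := (le_div_iff₀ hppos).mpr h2
  have hV : Vgen π τ = (topSum π L - τ) / p := rfl
  linarith

end AuxOracle

/-- Optimality of the randomized oracle set: any randomized prediction set `Cset`
(a set-valued function of the uniform variable `U`) with coverage at least `τ`
has expected cardinality at least that of `S(U; π, τ)`. -/
theorem oracle_optimality {C : ℕ} (π : Fin C → ℝ)
    (hpos : ∀ y, 0 < π y) (hsum : ∑ y, π y = 1) (hinj : Function.Injective π)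
    (τ : ℝ) (hτ : τ ∈ Set.Ioc (0 : ℝ) 1)
    (μ : Measure (Fin C)) (hμ : ∀ y, μ {y} = ENNReal.ofReal (π y))
    (Cset : ℝ → Finset (Fin C))
    (hCmeas : ∀ y : Fin C, MeasurableSet {u : ℝ | y ∈ Cset u})
    (hcov : ENNReal.ofReal τ ≤
      (μ.prod (volume.restrict (Set.Icc (0 : ℝ) 1)))
        {p : Fin C × ℝ | p.1 ∈ Cset p.2}) :
    ∫⁻ u in Set.Icc (0 : ℝ) 1, ((Sgen u π τ).card : ENNReal) ∂volume ≤
      ∫⁻ u in Set.Icc (0 : ℝ) 1, ((Cset u).card : ENNReal) ∂volume := by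
  classical
  set ν := volume.restrict (Set.Icc (0 : ℝ) 1) with hν
  set L := Lgen π τ with hLdef
  set V := Vgen π τ with hVdef
  have hL1 : 1 ≤ L := (Lgen_spec hsum hinj hτ).1
  have hLC : L ≤ C := Lgen_le_C hsum hinj hτ
  have hV0 : 0 ≤ V := Vgen_nonneg hpos hsum hinj hτ
  have hV1 : V < 1 := Vgen_lt_one hpos hsum hinj hτ
  -- the cardinality of the oracle set
  have hSgen : ∀ u : ℝ, ((Sgen u π τ).card : ℝ≥0∞)
      = if u ≤ V then ((L - 1 : ℕ) : ℝ≥0∞) else (L : ℝ≥0∞) := by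
    intro u
    rw [Sgen]
    split_ifs with h
    · rw [card_topSet hinj, min_eq_left (by omega)]
    · rw [card_topSet hinj, min_eq_left hLC]
  -- value of the left-hand side
  have hLHS : ∫⁻ u in Set.Icc (0:ℝ) 1, ((Sgen u π τ).card : ℝ≥0∞) ∂volume
      = ENNReal.ofReal ((L : ℝ) - V) := by
    have hsplit : Set.Icc (0:ℝ) 1 = Set.Icc 0 V ∪ Set.Ioc V 1 :=
      (Set.Icc_union_Ioc_eq_Icc hV0 hV1.le).symm
    rw [hsplit, lintegral_union measurableSet_Ioc
      (Set.disjoint_left.mpr (fun u hu hu2 => absurd hu.2 (not_le.mpr hu2.1)))]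
    have h1 : ∫⁻ u in Set.Icc (0:ℝ) V, ((Sgen u π τ).card : ℝ≥0∞) ∂volume
        = ((L - 1 : ℕ) : ℝ≥0∞) * ENNReal.ofReal V := by
      rw [setLIntegral_congr_fun measurableSet_Icc
        (fun u hu => by rw [hSgen u, if_pos hu.2])]
      rw [setLIntegral_const, Real.volume_Icc, sub_zero]
    have h2 : ∫⁻ u in Set.Ioc V 1, ((Sgen u π τ).card : ℝ≥0∞) ∂volume
        = (L : ℝ≥0∞) * ENNReal.ofReal (1 - V) := by
      rw [setLIntegral_congr_fun measurableSet_Ioc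
        (fun u hu => by rw [hSgen u, if_neg (not_le.mpr hu.1)])]
      rw [setLIntegral_const, Real.volume_Ioc]
    rw [h1, h2]
    have c1 : ((L - 1 : ℕ) : ℝ≥0∞) = ENNReal.ofReal ((L : ℝ) - 1) := by
      rw [← ENNReal.ofReal_natCast]
      congr 1
      push_cast [hL1]
      ring
    have c2 : (L : ℝ≥0∞) = ENNReal.ofReal (L : ℝ) := (ENNReal.ofReal_natCast L).symm
    have hLR : (0:ℝ) ≤ (L : ℝ) - 1 := by
      have : (1:ℝ) ≤ (L : ℝ) := by exact_mod_cast hL1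
      linarith
    rw [c1, c2, ← ENNReal.ofReal_mul hLR, ← ENNReal.ofReal_mul (Nat.cast_nonneg L),
      ← ENNReal.ofReal_add (mul_nonneg hLR hV0)
        (mul_nonneg (Nat.cast_nonneg L) (by linarith))]
    congr 1
    ring
  -- value of the right-hand side
  set m : Fin C → ℝ≥0∞ := fun y => ν {u : ℝ | y ∈ Cset u} with hm
  have hRHS : ∫⁻ u in Set.Icc (0:ℝ) 1, ((Cset u).card : ℝ≥0∞) ∂volume = ∑ y, m y := by
    have hcard : ∀ u, ((Cset u).card : ℝ≥0∞)
        = ∑ y : Fin C, Set.indicator {u' : ℝ | y ∈ Cset u'} (fun _ => (1:ℝ≥0∞)) u := by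
      intro u
      have : (Cset u).card = ∑ y : Fin C, if y ∈ Cset u then 1 else 0 := by
        rw [← Finset.card_filter]
        congr 1
        ext y; simp
      rw [this]
      push_cast
      apply Finset.sum_congr rfl
      intro y _
      simp [Set.indicator_apply]
    calc ∫⁻ u in Set.Icc (0:ℝ) 1, ((Cset u).card : ℝ≥0∞) ∂volume
        = ∫⁻ u in Set.Icc (0:ℝ) 1,
            ∑ y : Fin C, Set.indicator {u' : ℝ | y ∈ Cset u'} (fun _ => (1:ℝ≥0∞)) u ∂volume := by
          simp_rw [hcard]
      _ = ∑ y : Fin C, ∫⁻ u in Set.Icc (0:ℝ) 1,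
            Set.indicator {u' : ℝ | y ∈ Cset u'} (fun _ => (1:ℝ≥0∞)) u ∂volume := by
          apply lintegral_finset_sum
          intro y _
          exact (measurable_const.indicator (hCmeas y))
      _ = ∑ y, m y := by
          apply Finset.sum_congr rfl
          intro y _
          exact lintegral_indicator_one (hCmeas y)
  -- coverage in terms of m
  have hsmeas : MeasurableSet {p : Fin C × ℝ | p.1 ∈ Cset p.2} := by
    have : {p : Fin C × ℝ | p.1 ∈ Cset p.2} = ⋃ y : Fin C, {y} ×ˢ {u : ℝ | y ∈ Cset u} := by
      ext ⟨y, u⟩; simp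
    rw [this]
    exact MeasurableSet.iUnion (fun y => (measurableSet_singleton y).prod (hCmeas y))
  have hprod : (μ.prod ν) {p : Fin C × ℝ | p.1 ∈ Cset p.2}
      = ∑ y, m y * ENNReal.ofReal (π y) := by
    rw [Measure.prod_apply hsmeas, lintegral_fintype]
    apply Finset.sum_congr rfl
    intro y _
    rw [hμ]
    rfl
  -- pass to real numbers
  have hm_le : ∀ y, m y ≤ 1 := by
    intro y
    calc m y ≤ ν Set.univ := measure_mono (Set.subset_univ _)
      _ = volume (Set.Icc (0:ℝ) 1) := by rw [hν, Measure.restrict_apply_univ]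
      _ = 1 := by rw [Real.volume_Icc, sub_zero, ENNReal.ofReal_one]
  have hm_ne : ∀ y, m y ≠ ⊤ := fun y => ((hm_le y).trans_lt ENNReal.one_lt_top).ne
  set t : Fin C → ℝ := fun y => (m y).toReal with ht
  have hmt : ∀ y, m y = ENNReal.ofReal (t y) := fun y =>
    (ENNReal.ofReal_toReal (hm_ne y)).symm
  have ht0 : ∀ y, 0 ≤ t y := fun y => ENNReal.toReal_nonneg
  have ht1 : ∀ y, t y ≤ 1 := by
    intro y
    have := hm_le y
    rw [hmt y] at this
    exact ENNReal.ofReal_le_one.mp this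
  have hcov' : τ ≤ ∑ y, π y * t y := by
    have e : ∑ y, m y * ENNReal.ofReal (π y) = ENNReal.ofReal (∑ y, π y * t y) := by
      rw [ENNReal.ofReal_sum_of_nonneg
        (fun y _ => mul_nonneg (hpos y).le (ht0 y))]
      apply Finset.sum_congr rfl
      intro y _
      rw [hmt y, ← ENNReal.ofReal_mul (ht0 y), mul_comm]
    have h := hcov
    rw [hprod, e] at h
    exact (ENNReal.ofReal_le_ofReal_iff
      (Finset.sum_nonneg (fun y _ => mul_nonneg (hpos y).le (ht0 y)))).mp h
  have hkey : (L : ℝ) - V ≤ ∑ y, t y := key_real hpos hsum hinj hτ t ht0 ht1 hcov'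
  -- conclude
  rw [hLHS, hRHS]
  calc ENNReal.ofReal ((L : ℝ) - V) ≤ ENNReal.ofReal (∑ y, t y) :=
        ENNReal.ofReal_le_ofReal hkey
    _ = ∑ y, m y := by
        rw [ENNReal.ofReal_sum_of_nonneg (fun y _ => ht0 y)]
        exact Finset.sum_congr rfl (fun y _ => (hmt y).symm)
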